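/- arXiv:math/9604229 — 4 statements merged into one kernel-verified Lean document; each statement's English description precedes it below -/
import Mathlib

section
/- Let a_1, ..., a_n be positive real numbers and let 0 ≤ λ ≤ 1. Define a_j(λ) = 1 + λ(a_j - 1) and A_n(λ) = ∏_{j=1}^n a_j(λ). Then A_n(λ) ≥ min{1, A_n(1)}, i.e., ∏_{j=1}^n (1 + λ(a_j - 1)) ≥ min{1, ∏_{j=1}^n a_j}. -/
theorem stmt_0 (n : ℕ) (a : Fin n → ℝ) (ha : ∀ j, 0 < a j)
    (lam : ℝ) (h0 : 0 ≤ lam) (h1 : lam ≤ 1) :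
    ∏ j, (1 + lam * (a j - 1)) ≥ min 1 (∏ j, a j) := by
  have hP : 0 < ∏ j, a j := Finset.prod_pos fun j _ => ha j
  have step1 : (∏ j, a j) ^ lam ≤ ∏ j, (1 + lam * (a j - 1)) := by
    rw [← Real.finset_prod_rpow _ _ (fun j _ => (ha j).le)]
    apply Finset.prod_le_prod
    · intro j _
      exact Real.rpow_nonneg (ha j).le lam
    · intro j _
      have := Real.geom_mean_le_arith_mean2_weighted (by linarith : (0:ℝ) ≤ 1 - lam)
        h0 zero_le_one (ha j).le (by ring)
      calc a j ^ lam = 1 ^ (1 - lam) * a j ^ lam := by rw [Real.one_rpow, one_mul]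
        _ ≤ (1 - lam) * 1 + lam * a j := this
        _ = 1 + lam * (a j - 1) := by ring
  have step2 : min 1 (∏ j, a j) ≤ (∏ j, a j) ^ lam := by
    rcases le_or_gt 1 (∏ j, a j) with h | h
    · calc min 1 (∏ j, a j) ≤ 1 := min_le_left _ _
        _ ≤ (∏ j, a j) ^ lam := Real.one_le_rpow h h0
    · calc min 1 (∏ j, a j) ≤ ∏ j, a j := min_le_right _ _
        _ = (∏ j, a j) ^ (1:ℝ) := (Real.rpow_one _).symm
        _ ≤ (∏ j, a j) ^ lam := Real.rpow_le_rpow_of_exponent_ge hP h.le h1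
  exact le_trans step2 step1
end

section
/- Let a_1, ..., a_n be positive real numbers and let 0 ≤ λ ≤ 1. Then ∏_{j=1}^n ((1-λ) + λ a_j) ≥ (λ (∏_{j=1}^n a_j)^{1/n} + (1-λ))^n. -/
open Finset Real

theorem stmt_1 (n : ℕ) (hn : 0 < n) (a : Fin n → ℝ) (ha : ∀ j, 0 < a j)
    (lam : ℝ) (h0 : 0 ≤ lam) (h1 : lam ≤ 1) :
    ∏ j, ((1 - lam) + lam * a j) ≥
      (lam * (∏ j, a j) ^ ((1 : ℝ) / n) + (1 - lam)) ^ n := by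
  set b : Fin n → ℝ := fun j => (1 - lam) + lam * a j with hb
  have h1l : (0:ℝ) ≤ 1 - lam := by linarith
  have hbpos : ∀ j, 0 < b j := by
    intro j
    rcases lt_or_eq_of_le h1 with h | h
    · have := mul_nonneg h0 (ha j).le; simp only [hb]; nlinarith
    · simp only [hb, ← h]; simpa using mul_pos (by linarith : (0:ℝ) < lam) (ha j)
  have hn' : (0:ℝ) < n := by exact_mod_cast hn
  have hw : ∀ i ∈ (univ : Finset (Fin n)), (0:ℝ) ≤ 1 / n := fun _ _ => by positivity
  have hw' : ∑ _i : Fin n, (1:ℝ)/n = 1 := by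
    rw [Finset.sum_const, card_univ, Fintype.card_fin, nsmul_eq_mul]
    field_simp
  have hP : (0:ℝ) < ∏ j, b j := Finset.prod_pos fun j _ => hbpos j
  set S : ℝ := (∏ j, b j) ^ ((1:ℝ)/n) with hS
  have hSpos : 0 < S := Real.rpow_pos_of_pos hP _
  -- helper to compute ∏ (c * x j / b j)^(1/n)
  have prodcalc : ∀ (f : Fin n → ℝ), (∀ j, 0 ≤ f j) →
      ∏ j, (f j / b j) ^ ((1:ℝ)/n) = (∏ j, f j) ^ ((1:ℝ)/n) / S := by
    intro f hf
    rw [hS, Real.finset_prod_rpow _ _ (fun j _ => div_nonneg (hf j) (hbpos j).le),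
      Finset.prod_div_distrib, Real.div_rpow (Finset.prod_nonneg fun j _ => hf j) hP.le]
  have amgm1 : ∏ j, ((1 - lam) / b j) ^ ((1:ℝ)/n) ≤ ∑ j, (1/n) * ((1 - lam) / b j) :=
    Real.geom_mean_le_arith_mean_weighted univ _ _ hw hw'
      fun j _ => div_nonneg h1l (hbpos j).le
  have amgm2 : ∏ j, (lam * a j / b j) ^ ((1:ℝ)/n) ≤ ∑ j, (1/n) * (lam * a j / b j) :=
    Real.geom_mean_le_arith_mean_weighted univ _ _ hw hw'
      fun j _ => div_nonneg (mul_nonneg h0 (ha j).le) (hbpos j).le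
  have hsum : (∑ j, (1/n) * ((1 - lam) / b j)) + ∑ j, (1/n) * (lam * a j / b j) = 1 := by
    have hc : ∀ j ∈ (univ : Finset (Fin n)),
        (1/n:ℝ) * ((1 - lam) / b j) + (1/n) * (lam * a j / b j) = 1/n := by
      intro j _
      have hbne := (hbpos j).ne'
      simp only [hb] at hbne ⊢
      field_simp
    rw [← Finset.sum_add_distrib, Finset.sum_congr rfl hc, hw']
  have e1 : ∏ j, ((1 - lam) / b j) ^ ((1:ℝ)/n) = (1 - lam) / S := by
    rw [prodcalc _ (fun _ => h1l), Finset.prod_const, card_univ, Fintype.card_fin,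
      ← Real.rpow_natCast (1-lam) n, ← Real.rpow_mul h1l]
    rw [mul_one_div, div_self hn'.ne', Real.rpow_one]
  have e2 : ∏ j, (lam * a j / b j) ^ ((1:ℝ)/n) =
      lam * (∏ j, a j) ^ ((1:ℝ)/n) / S := by
    rw [prodcalc _ (fun j => mul_nonneg h0 (ha j).le)]
    congr 1
    rw [Finset.prod_mul_distrib, Finset.prod_const, card_univ, Fintype.card_fin,
      Real.mul_rpow (pow_nonneg h0 n) (Finset.prod_nonneg fun j _ => (ha j).le.trans_eq rfl),
      ← Real.rpow_natCast lam n, ← Real.rpow_mul h0, mul_one_div, div_self hn'.ne',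
      Real.rpow_one]
  have key : lam * (∏ j, a j) ^ ((1:ℝ)/n) + (1 - lam) ≤ S := by
    rw [e1] at amgm1; rw [e2] at amgm2
    have h2 := add_le_add amgm2 amgm1
    rw [← add_div] at h2
    have h3 : (lam * (∏ j, a j) ^ ((1:ℝ)/n) + (1 - lam)) / S ≤ 1 :=
      h2.trans_eq (by rw [add_comm, hsum])
    exact (div_le_one hSpos).mp h3
  have hG0 : 0 ≤ lam * (∏ j, a j) ^ ((1:ℝ)/n) + (1 - lam) :=
    add_nonneg (mul_nonneg h0 (Real.rpow_nonneg
      (Finset.prod_nonneg fun j _ => (ha j).le) _)) h1l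
  calc (lam * (∏ j, a j) ^ ((1:ℝ)/n) + (1 - lam)) ^ n ≤ S ^ n :=
        pow_le_pow_left₀ hG0 key n
    _ = ∏ j, b j := by
        rw [hS, ← Real.rpow_natCast _ n, ← Real.rpow_mul hP.le, one_div,
          inv_mul_cancel₀ hn'.ne', Real.rpow_one]
end

section
/- Let n ≥ 2, p > 1 with 2^{n/p} < 2^n/(n+1). Then there exist points P, P_λ in the open cube (0,1)^n and λ ∈ (0,1) such that: P_λ = (1/2,...,1/2) + λ(P − (1/2,...,1/2)) componentwise, f(P) < 2^{n/p}, and f(P_λ) ≥ 2^{n/p}, where f(x_1,...,x_n) = 2^n x_1⋯x_n. -/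
lemma amgm_aux (k : ℕ) (hk : 1 ≤ k) (A y : ℝ) (hA : 0 < A) (hAy : A < y) :
    ((k:ℝ)+1)*A*y^k < A^(k+1) + (k:ℝ)*y^(k+1) := by
  induction k with
  | zero => omega
  | succ j ih =>
    rcases Nat.eq_zero_or_pos j with hj | hj
    · subst hj
      push_cast
      nlinarith [sq_nonneg (y - A)]
    · have IH := ih hj
      have hy : 0 < y := hA.trans hAy
      have hpow : A^(j+1) ≤ y^(j+1) := pow_le_pow_left₀ hA.le hAy.le _
      have h2 : (0:ℝ) ≤ (y^(j+1) - A^(j+1)) * (y - A) :=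
        mul_nonneg (by linarith) (by linarith)
      have IH' := mul_lt_mul_of_pos_right IH hy
      push_cast
      push_cast at IH'
      simp only [pow_succ] at *
      nlinarith [IH', h2]

lemma key_ineq (q : ℕ) (hq : 1 ≤ q) (b : ℝ) (hlb : (q:ℝ)/((q:ℝ)+2) < b) (hb1 : b < 1) :
    2^q * b^q * ((q:ℝ)+1)^(q+1) * (1-b) < (q:ℝ)^q * (1+b)^(q+1) := by
  have hq0 : (0:ℝ) < q := by exact_mod_cast hq
  have hb0 : 0 < b := lt_of_le_of_lt (by positivity) hlb
  set y : ℝ := 2*b*((q:ℝ)+1)/q with hy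
  have hAy : 1+b < y := by
    rw [hy, lt_div_iff₀ hq0]
    rw [div_lt_iff₀ (by positivity)] at hlb
    nlinarith
  have h := amgm_aux q hq (1+b) y (by positivity) hAy
  have hyq : y^q * (q:ℝ)^q = (2*b*((q:ℝ)+1))^q := by
    rw [hy, div_pow, div_mul_cancel₀]
    positivity
  have hyq1 : y^(q+1) * (q:ℝ)^(q+1) = (2*b*((q:ℝ)+1))^(q+1) := by
    rw [hy, div_pow, div_mul_cancel₀]
    positivity
  have h' := mul_lt_mul_of_pos_right h (pow_pos hq0 (q+1))
  have e0 : ((q:ℝ)+1)*(1+b)*y^q * (q:ℝ)^(q+1) = ((q:ℝ)+1)*(1+b)*(2*b*((q:ℝ)+1))^q * q := by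
    rw [pow_succ]
    linear_combination ((q:ℝ)+1)*(1+b)*(q:ℝ) * hyq
  have e1 : ((1+b)^(q+1) + (q:ℝ)*y^(q+1)) * (q:ℝ)^(q+1)
      = (1+b)^(q+1) * (q:ℝ)^(q+1) + (q:ℝ)*(2*b*((q:ℝ)+1))^(q+1) := by
    linear_combination (q:ℝ) * hyq1
  rw [e0, e1] at h'
  rw [← mul_lt_mul_iff_left₀ hq0]
  simp only [pow_succ, mul_pow] at h' ⊢
  nlinarith [h']

set_option maxHeartbeats 1000000 in
theorem stmt_13 (n : ℕ) (hn : 2 ≤ n) (p : ℝ) (hp : 1 < p)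
    (h : (2 : ℝ) ^ ((n : ℝ) / p) < 2 ^ n / (n + 1)) :
    ∃ (P Pl : Fin n → ℝ) (lam : ℝ), lam ∈ Set.Ioo (0 : ℝ) 1 ∧
      (∀ i, P i ∈ Set.Ioo (0 : ℝ) 1) ∧ (∀ i, Pl i ∈ Set.Ioo (0 : ℝ) 1) ∧
      (∀ i, Pl i = 1 / 2 + lam * (P i - 1 / 2)) ∧
      2 ^ n * ∏ i, P i < (2 : ℝ) ^ ((n : ℝ) / p) ∧
      2 ^ n * ∏ i, Pl i ≥ (2 : ℝ) ^ ((n : ℝ) / p) := by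
  obtain ⟨m, rfl⟩ : ∃ m, n = m + 2 := ⟨n - 2, by omega⟩
  set c : ℝ := (2 : ℝ) ^ ((((m:ℕ) + 2 : ℕ) : ℝ) / p) with hcdef
  have hp0 : 0 < p := lt_trans one_pos hp
  have hc1 : 1 < c := by
    rw [hcdef]
    apply Real.one_lt_rpow_iff_of_pos (by norm_num) |>.mpr
    left
    exact ⟨by norm_num, by push_cast; positivity⟩
  have hc0 : 0 < c := lt_trans one_pos hc1
  -- b
  set b : ℝ := 1 - c / 2^(m+1) with hbdef
  have h2pos : (0:ℝ) < 2^(m+1) := by positivity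
  have hcb : c = 2^(m+1) * (1 - b) := by
    rw [hbdef]; field_simp; ring
  have hb1 : b < 1 := by
    rw [hbdef]
    have : 0 < c / 2^(m+1) := by positivity
    linarith
  have hlb : ((m:ℝ)+1)/((m:ℝ)+3) < b := by
    -- from h : c < 2^(m+2)/(m+3)
    have hh : c < 2^(m+2) / ((m:ℝ)+3) := by
      have := h
      push_cast at this
      convert this using 2 <;> push_cast <;> ring
    have hA : ((m:ℝ)+1)/((m:ℝ)+3) = 1 - 2/((m:ℝ)+3) := by
      field_simp
      ring
    have h3 : c/2^(m+1) < 2/((m:ℝ)+3) := by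
      rw [div_lt_div_iff₀ h2pos (by positivity)]
      rw [lt_div_iff₀ (by positivity)] at hh
      have e : (2:ℝ)^(m+2) = 2^(m+1) * 2 := by rw [pow_succ]
      nlinarith [hh]
    rw [hbdef, hA]
    linarith
  have hb0 : 0 < b := lt_trans (by positivity) hlb
  clear_value b
  -- lam
  set lam : ℝ := ((m:ℝ)+1-b)/(b*((m:ℝ)+2)) with hlamdef
  have hmden : (0:ℝ) < b*((m:ℝ)+2) := by positivity
  have hlam0 : 0 < lam := by
    rw [hlamdef]
    apply div_pos _ hmden
    have : (0:ℝ) ≤ (m:ℝ) := Nat.cast_nonneg m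
    linarith
  have hlam1 : lam < 1 := by
    rw [hlamdef, div_lt_one hmden]
    rw [div_lt_iff₀ (by positivity)] at hlb
    nlinarith [hlb]
  have e1 : 1 - lam*b = (1+b)/((m:ℝ)+2) := by
    rw [hlamdef]; field_simp; ring
  have e2 : 1 + lam = ((m:ℝ)+1)*(1+b)/(b*((m:ℝ)+2)) := by
    rw [hlamdef]; field_simp; ring
  clear_value lam
  -- g
  set g : ℝ := (1+lam)^(m+1) * (1-lam*b) with hgdef
  have hlb' : 0 < 1 - lam*b := by rw [e1]; positivity
  have hg0 : 0 < g := by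
    rw [hgdef]; positivity
  have hcg : c < g := by
    have hlb2 : (((m:ℝ)+1))/(((m:ℝ)+1)+2) < b := by
      have e : ((m:ℝ)+1)+2 = (m:ℝ)+3 := by ring
      rw [e]; exact hlb
    have hk := key_ineq (m+1) (by omega) b (by push_cast; exact hlb2) hb1
    push_cast at hk
    rw [hgdef, e1, e2, hcb, div_pow, div_mul_div_comm, lt_div_iff₀ (by positivity)]
    have hbm2 : ((b*((m:ℝ)+2))^(m+1) * ((m:ℝ)+2)) = b^(m+1) * ((m:ℝ)+2)^(m+2) := by
      rw [mul_pow, pow_succ]; ring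
    calc 2^(m+1) * (1-b) * ((b*((m:ℝ)+2))^(m+1) * ((m:ℝ)+2))
        = 2^(m+1) * b^(m+1) * ((m:ℝ)+2)^(m+2) * (1-b) := by rw [hbm2]; ring
      _ < ((m:ℝ)+1)^(m+1) * (1+b)^(m+2) := by
          have := hk
          convert this using 2 <;> push_cast <;> ring_nf
      _ = (((m:ℝ)+1)*(1+b))^(m+1) * (1+b) := by rw [mul_pow, pow_succ]; ring
  clear_value g
  -- rho
  set rho : ℝ := (c/g) ^ ((1:ℝ)/((m:ℝ)+1)) with hrhodef
  have hcg0 : 0 < c/g := div_pos hc0 hg0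
  have hrho0 : 0 < rho := Real.rpow_pos_of_pos hcg0 _
  have hrho1 : rho < 1 := by
    rw [hrhodef]
    apply Real.rpow_lt_one hcg0.le ((div_lt_one hg0).mpr hcg)
    positivity
  have hrhopow : rho ^ (m+1) = c/g := by
    rw [hrhodef, ← Real.rpow_natCast ((c/g) ^ ((1:ℝ)/((m:ℝ)+1))) (m+1),
      ← Real.rpow_mul hcg0.le]
    rw [show (1:ℝ)/((m:ℝ)+1) * ((m+1:ℕ):ℝ) = 1 by push_cast; field_simp]
    exact Real.rpow_one _
  clear_value rho
  -- (1+lam)*rho > 1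
  have hlam1' : 0 < 1 + lam := by linarith
  have hbig : 1 < (1+lam)*rho := by
    have hpow : (1:ℝ)^(m+1) < ((1+lam)*rho)^(m+1) := by
      rw [one_pow, mul_pow, hrhopow, hgdef]
      have hne : ((1+lam):ℝ)^(m+1) ≠ 0 := by positivity
      rw [show (1+lam)^(m+1) * (c / ((1+lam)^(m+1) * (1-lam*b))) = c/(1-lam*b) from by
        field_simp]
      rw [lt_div_iff₀ hlb']
      nlinarith [mul_pos hlam0 hb0]
    exact lt_of_pow_lt_pow_left₀ _ (by positivity) hpow
  -- T
  set T : ℝ := 1/2 + ((1+lam)*rho - 1)/(2*lam) with hTdef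
  have hThalf : 1/2 < T := by
    rw [hTdef]
    have : 0 < ((1+lam)*rho - 1)/(2*lam) := div_pos (by linarith) (by linarith)
    linarith
  have hT1 : T < 1 := by
    rw [hTdef]
    have hnum : (1+lam)*rho - 1 < lam := by
      linarith [mul_lt_of_lt_one_right hlam1' hrho1]
    have hq : ((1+lam)*rho - 1)/(2*lam) < 1/2 := by
      rw [div_lt_iff₀ (by linarith : (0:ℝ) < 2*lam)]
      linarith
    linarith
  have hT0 : 0 < T := lt_trans one_half_pos hThalf
  clear_value T
  -- the points
  refine ⟨fun i => if i = 0 then (1-b)/2 else T,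
          fun i => if i = 0 then (1-lam*b)/2 else (1+lam)*rho/2,
          lam, ⟨hlam0, hlam1⟩, ?_, ?_, ?_, ?_, ?_⟩
  · intro i
    by_cases hi : i = 0 <;> simp [hi]
    · constructor <;> nlinarith
    · exact ⟨hT0, hT1⟩
  · intro i
    by_cases hi : i = 0 <;> simp [hi]
    · constructor <;> nlinarith [mul_pos hlam0 hb0]
    · constructor
      · positivity
      · nlinarith [mul_lt_of_lt_one_right hlam1' hrho1]
  · intro i
    by_cases hi : i = 0 <;> simp [hi]
    · ring
    · rw [hTdef]
      field_simp
      ring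
  · -- f(P) < c
    rw [Fin.prod_univ_succ]
    simp only [if_pos rfl, if_true]
    have hprod : (∏ i : Fin (m+1), (if (Fin.succ i) = (0 : Fin (m+2)) then (1-b)/2 else T))
        = T^(m+1) := by
      rw [Finset.prod_congr rfl (fun i _ => if_neg (Fin.succ_ne_zero i)),
        Finset.prod_const, Finset.card_univ, Fintype.card_fin]
    rw [hprod]
    have hTpow : T^(m+1) < 1 := pow_lt_one₀ hT0.le hT1 (by omega)
    calc (2:ℝ)^(m+2) * ((1-b)/2 * T^(m+1)) = c * T^(m+1) := by
          rw [hcb]; ring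
      _ < c * 1 := by exact mul_lt_mul_of_pos_left hTpow hc0
      _ = c := mul_one c
  · -- f(Pl) ≥ c
    rw [Fin.prod_univ_succ]
    simp only [if_pos rfl, if_true]
    have hprod : (∏ i : Fin (m+1), (if (Fin.succ i) = (0 : Fin (m+2)) then (1-lam*b)/2 else (1+lam)*rho/2))
        = ((1+lam)*rho/2)^(m+1) := by
      rw [Finset.prod_congr rfl (fun i _ => if_neg (Fin.succ_ne_zero i)),
        Finset.prod_const, Finset.card_univ, Fintype.card_fin]
    rw [hprod]
    have : (2:ℝ)^(m+2) * ((1-lam*b)/2 * ((1+lam)*rho/2)^(m+1)) = c := by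
      rw [div_pow, mul_pow, hrhopow, hgdef]
      have hne : ((1+lam):ℝ)^(m+1) ≠ 0 := by positivity
      have h2ne : ((2:ℝ))^(m+1) ≠ 0 := by positivity
      field_simp
      ring
    rw [this]
end

section
/- Let 0 < x < 1 and 0 ≤ λ ≤ 1. Then for any positive integer n and any t_1, ..., t_n ∈ (0,1), ∏_{i=1}^n (λ·2t_i + (1−λ)) ≥ (λ(∏ 2t_i)^{1/n} + (1−λ))^n ≥ min{1, 2^n ∏ t_i}. -/
theorem stmt_17 (lam : ℝ) (h0 : 0 ≤ lam) (h1 : lam ≤ 1)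
    (n : ℕ) (hn : 0 < n) (t : Fin n → ℝ) (ht : ∀ i, t i ∈ Set.Ioo (0 : ℝ) 1) :
    ∏ i, (lam * (2 * t i) + (1 - lam)) ≥
        (lam * (∏ i, 2 * t i) ^ ((1 : ℝ) / n) + (1 - lam)) ^ n ∧
      (lam * (∏ i, 2 * t i) ^ ((1 : ℝ) / n) + (1 - lam)) ^ n ≥
        min 1 (2 ^ n * ∏ i, t i) := by
  have hn0 : (n : ℝ) ≠ 0 := Nat.cast_ne_zero.2 hn.ne'
  set d : Fin n → ℝ := fun i => lam * (2 * t i) + (1 - lam) with hd_def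
  have ht2 : ∀ i, 0 < 2 * t i := fun i => by have := (ht i).1; linarith
  have hd : ∀ i, 0 < d i := by
    intro i
    rcases lt_or_eq_of_le h1 with h | h
    · have : 0 ≤ lam * (2 * t i) := mul_nonneg h0 (ht2 i).le
      simp only [hd_def]; linarith
    · subst h
      simp only [hd_def]
      have := ht2 i; linarith
  have hP2 : (0 : ℝ) < ∏ i, 2 * t i := Finset.prod_pos fun i _ => ht2 i
  have hD : (0 : ℝ) < ∏ i, d i := Finset.prod_pos fun i _ => hd i
  set c : ℝ := (1 : ℝ) / n with hc
  set G : ℝ := (∏ i, 2 * t i) ^ c with hG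
  have hGpos : 0 < G := Real.rpow_pos_of_pos hP2 c
  -- weights
  have hwsum : ∑ _i : Fin n, c = 1 := by
    simp [hc, Finset.sum_const, mul_one_div]
    field_simp
  have hwnn : ∀ i ∈ (Finset.univ : Finset (Fin n)), (0 : ℝ) ≤ c := by
    intro i _; positivity
  -- first AM-GM : z i = (2 t i) / d i
  have amgm1 := Real.geom_mean_le_arith_mean_weighted Finset.univ (fun _ => c)
      (fun i => (2 * t i) / d i) hwnn hwsum
      (fun i _ => div_nonneg (ht2 i).le (hd i).le)
  have amgm2 := Real.geom_mean_le_arith_mean_weighted Finset.univ (fun _ => c)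
      (fun i => 1 / d i) hwnn hwsum
      (fun i _ => div_nonneg zero_le_one (hd i).le)
  have hprod1 : ∏ i, ((2 * t i) / d i) ^ c = G / (∏ i, d i) ^ c := by
    rw [Real.finset_prod_rpow _ _ (fun i _ => div_nonneg (ht2 i).le (hd i).le),
      Finset.prod_div_distrib,
      Real.div_rpow hP2.le (Finset.prod_nonneg fun i _ => (hd i).le)]
  have hprod2 : ∏ i, ((1 : ℝ) / d i) ^ c = 1 / (∏ i, d i) ^ c := by
    have h1 : (∏ i, (1 : ℝ) / d i) = 1 / ∏ i, d i := by
      rw [Finset.prod_div_distrib, Finset.prod_const_one]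
    rw [Real.finset_prod_rpow _ _ (fun i _ => div_nonneg zero_le_one (hd i).le), h1,
      Real.div_rpow zero_le_one (Finset.prod_nonneg fun i _ => (hd i).le), Real.one_rpow]
  have hDc : 0 < (∏ i, d i) ^ c := Real.rpow_pos_of_pos hD c
  -- combine
  have hsum : lam * (G / (∏ i, d i) ^ c) + (1 - lam) * (1 / (∏ i, d i) ^ c) ≤ 1 := by
    have e1 : lam * (G / (∏ i, d i) ^ c) ≤ lam * ∑ i, c * ((2 * t i) / d i) := by
      rw [← hprod1]; exact mul_le_mul_of_nonneg_left amgm1 h0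
    have e2 : (1 - lam) * (1 / (∏ i, d i) ^ c) ≤ (1 - lam) * ∑ i, c * (1 / d i) := by
      rw [← hprod2]; exact mul_le_mul_of_nonneg_left amgm2 (by linarith)
    have key : lam * ∑ i, c * ((2 * t i) / d i) + (1 - lam) * ∑ i, c * (1 / d i) = 1 := by
      rw [Finset.mul_sum, Finset.mul_sum, ← Finset.sum_add_distrib]
      rw [show ∑ i, (lam * (c * (2 * t i / d i)) + (1 - lam) * (c * (1 / d i)))
          = ∑ _i : Fin n, c from Finset.sum_congr rfl fun i _ => ?_, hwsum]
      have hdne : d i ≠ 0 := (hd i).ne'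
      have hone : lam * (2 * t i / d i) + (1 - lam) * (1 / d i) = 1 := by
        rw [mul_div_assoc' lam, mul_one_div, ← add_div, hd_def]
        exact div_self hdne
      calc lam * (c * (2 * t i / d i)) + (1 - lam) * (c * (1 / d i))
          = c * (lam * (2 * t i / d i) + (1 - lam) * (1 / d i)) := by ring
        _ = c := by rw [hone, mul_one]
    linarith
  have main : lam * G + (1 - lam) ≤ (∏ i, d i) ^ c := by
    have := mul_le_mul_of_nonneg_right hsum hDc.le
    rw [add_mul, one_mul] at this
    calc lam * G + (1 - lam)
        = lam * (G / (∏ i, d i) ^ c) * (∏ i, d i) ^ c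
          + (1 - lam) * (1 / (∏ i, d i) ^ c) * (∏ i, d i) ^ c := by
          field_simp
      _ ≤ (∏ i, d i) ^ c := this
  have hLnn : 0 ≤ lam * G + (1 - lam) := by
    have : 0 ≤ lam * G := mul_nonneg h0 hGpos.le
    linarith
  have hDcn : ((∏ i, d i) ^ c) ^ n = ∏ i, d i := by
    rw [hc, one_div]
    exact Real.rpow_inv_natCast_pow hD.le hn.ne'
  constructor
  · calc (lam * G + (1 - lam)) ^ n ≤ ((∏ i, d i) ^ c) ^ n :=
        pow_le_pow_left₀ hLnn main n
      _ = ∏ i, d i := hDcn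
  · -- second inequality
    have hGn : G ^ n = 2 ^ n * ∏ i, t i := by
      rw [hG, hc, one_div, Real.rpow_inv_natCast_pow hP2.le hn.ne']
      rw [Finset.prod_mul_distrib]
      simp
    have hmin : min 1 G ≤ lam * G + (1 - lam) := by
      rcases le_total G 1 with h | h
      · rw [min_eq_right h]
        nlinarith
      · rw [min_eq_left h]
        nlinarith
    have hminnn : 0 ≤ min 1 G := le_min zero_le_one hGpos.le
    have := pow_le_pow_left₀ hminnn hmin n
    rcases le_total G 1 with h | h
    · rw [min_eq_right h] at this
      have : G ^ n ≤ (lam * G + (1 - lam)) ^ n := this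
      have hGn1 : G ^ n ≤ 1 := pow_le_one₀ hGpos.le h
      rw [ge_iff_le, ← hGn, min_eq_right (by linarith [hGn])]
      linarith [hGn ▸ this]
    · rw [min_eq_left h] at this
      simp only [one_pow] at this
      have h1G : (1:ℝ) ≤ G ^ n := one_le_pow₀ h
      rw [ge_iff_le, ← hGn, min_eq_left (by linarith)]
      exact this
end
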